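/- Let t > 0 and let y₁, y₂ ∈ (-1/4, 0) with y₁ ≠ y₂. Set x_i = 4t/(1 - 16·y_i²) for i = 1, 2. Then ( (1 - 2t/x₁ - 2t/x₂)/(32·(x₁ - x₂)²·y₁·y₂) + 1/(2·(x₁ - x₂)²) ) · (128·t·y₁/(1 - 16·y₁²)²) · (128·t·y₂/(1 - 16·y₂²)²) = 1/(y₁ - y₂)². -/
import Mathlib

/-- On the spectral curve `y² = 1/16 - t/(4x)` parametrized by `x = 4t/(1-16y²)`,
the corrected genus-zero two-point differential equals the Bergman kernel
`dy₁dy₂/(y₁-y₂)²`. -/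
theorem stmt_19 (t : ℝ) (ht : 0 < t) (y₁ y₂ : ℝ)
    (h1 : y₁ ∈ Set.Ioo (-(1 / 4) : ℝ) 0) (h2 : y₂ ∈ Set.Ioo (-(1 / 4) : ℝ) 0)
    (hne : y₁ ≠ y₂) (x₁ x₂ : ℝ)
    (hx1 : x₁ = 4 * t / (1 - 16 * y₁ ^ 2)) (hx2 : x₂ = 4 * t / (1 - 16 * y₂ ^ 2)) :
    ((1 - 2 * t / x₁ - 2 * t / x₂) / (32 * (x₁ - x₂) ^ 2 * y₁ * y₂) +
        1 / (2 * (x₁ - x₂) ^ 2)) *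
      (128 * t * y₁ / (1 - 16 * y₁ ^ 2) ^ 2) * (128 * t * y₂ / (1 - 16 * y₂ ^ 2) ^ 2) =
    1 / (y₁ - y₂) ^ 2 := by
  obtain ⟨ha1, hb1⟩ := h1
  obtain ⟨ha2, hb2⟩ := h2
  have hy1 : y₁ ≠ 0 := ne_of_lt hb1
  have hy2 : y₂ ≠ 0 := ne_of_lt hb2
  have hd1 : (1 : ℝ) - 16 * y₁ ^ 2 > 0 := by nlinarith
  have hd2 : (1 : ℝ) - 16 * y₂ ^ 2 > 0 := by nlinarith
  have hsum : y₁ + y₂ ≠ 0 := by nlinarith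
  have hdiff : y₁ - y₂ ≠ 0 := sub_ne_zero.mpr hne
  have hS : x₁ - x₂ = 64 * t * (y₁ - y₂) * (y₁ + y₂) /
      ((1 - 16 * y₁ ^ 2) * (1 - 16 * y₂ ^ 2)) := by
    rw [hx1, hx2]
    field_simp
    ring
  have ht1 : 2 * t / x₁ = (1 - 16 * y₁ ^ 2) / 2 := by
    rw [hx1]; field_simp; ring
  have ht2 : 2 * t / x₂ = (1 - 16 * y₂ ^ 2) / 2 := by
    rw [hx2]; field_simp; ring
  rw [ht1, ht2, hS]
  rw [div_pow]
  field_simp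
  ring
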